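/- Let K₀ be a number field and K a quadratic field extension of K₀, with rings of integers O_{K₀} ⊆ O_K. For any nonzero ideal 𝔣₀ of O_{K₀}, the set O_{K₀} + 𝔣₀O_K (sums of an element of O_{K₀} and an element of the ideal of O_K generated by 𝔣₀) is an order in K containing O_{K₀}, and its conductor {x ∈ K : x·O_K ⊆ O_{K₀} + 𝔣₀O_K} equals 𝔣₀O_K. -/

import Mathlib

open NumberField

/-- An order in a number field `K`: a subring (equivalently, a `ℤ`-subalgebra) of `K` that is
finitely generated as a `ℤ`-module and contains a `ℚ`-basis of `K` (i.e. spans `K` over `ℚ`). -/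
def IsOrder (K : Type*) [Field K] [NumberField K] (O : Subalgebra ℤ K) : Prop :=
  (Subalgebra.toSubmodule O).FG ∧ Submodule.span ℚ (O : Set K) = ⊤

/-- The ring of integers of `K₀` viewed as a subset of `K`. -/
noncomputable def realIntegers (K₀ K : Type*) [Field K₀] [NumberField K₀] [Field K]
    [NumberField K] [Algebra K₀ K] : Set K :=
  Set.range (fun a : 𝓞 K₀ => algebraMap K₀ K (algebraMap (𝓞 K₀) K₀ a))

/-- The conductor of a subset `O` of `K`: the set `{x ∈ K : x · 𝓞 K ⊆ O}`. -/
def conductorSet (K : Type*) [Field K] [NumberField K] (O : Set K) : Set K :=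
  {x : K | ∀ y : 𝓞 K, x * algebraMap (𝓞 K) K y ∈ O}

/-- The subset `𝓞 K₀ + 𝔣₀ 𝓞 K` of `K`: sums of an element of `𝓞 K₀` and an element of the
ideal of `𝓞 K` generated by the ideal `𝔣₀` of `𝓞 K₀`. -/
noncomputable def ordSet (K₀ K : Type*) [Field K₀] [NumberField K₀] [Field K]
    [NumberField K] [Algebra K₀ K] (𝔣₀ : Ideal (𝓞 K₀)) : Set K :=
  {z : K | ∃ a : 𝓞 K₀, ∃ b ∈ Ideal.map (algebraMap (𝓞 K₀) (𝓞 K)) 𝔣₀,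
    z = algebraMap K₀ K (algebraMap (𝓞 K₀) K₀ a) + algebraMap (𝓞 K) K b}

section Aux

variable {K₀ K : Type*} [Field K₀] [NumberField K₀] [Field K] [NumberField K] [Algebra K₀ K]

private lemma hcomp (a : 𝓞 K₀) :
    algebraMap K₀ K (algebraMap (𝓞 K₀) K₀ a)
      = algebraMap (𝓞 K) K (algebraMap (𝓞 K₀) (𝓞 K) a) := by
  rw [← IsScalarTower.algebraMap_apply, ← IsScalarTower.algebraMap_apply]

private lemma mem_ordSet_of (𝔣₀ : Ideal (𝓞 K₀)) (a : 𝓞 K₀)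
    {b : 𝓞 K} (hb : b ∈ Ideal.map (algebraMap (𝓞 K₀) (𝓞 K)) 𝔣₀) :
    algebraMap (𝓞 K) K (algebraMap (𝓞 K₀) (𝓞 K) a + b) ∈ ordSet K₀ K 𝔣₀ :=
  ⟨a, b, hb, by rw [map_add, hcomp]⟩

private lemma mem_ordSet_of_mem_map {𝔣₀ : Ideal (𝓞 K₀)}
    {b : 𝓞 K} (hb : b ∈ Ideal.map (algebraMap (𝓞 K₀) (𝓞 K)) 𝔣₀) :
    algebraMap (𝓞 K) K b ∈ ordSet K₀ K 𝔣₀ :=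
  ⟨0, b, hb, by rw [map_zero, map_zero, zero_add]⟩

private lemma ordSet_sub_mem {𝔣₀ : Ideal (𝓞 K₀)} {z z' : K}
    (hz : z ∈ ordSet K₀ K 𝔣₀) (hz' : z' ∈ ordSet K₀ K 𝔣₀) :
    z - z' ∈ ordSet K₀ K 𝔣₀ := by
  obtain ⟨a, b, hb, rfl⟩ := hz
  obtain ⟨a', b', hb', rfl⟩ := hz'
  refine ⟨a - a', b - b', sub_mem hb hb', ?_⟩
  rw [map_sub, map_sub, map_sub]
  ring

/-- The subalgebra of `𝓞 K` whose image in `K` is `ordSet`. -/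
private def ordSub (𝔣₀ : Ideal (𝓞 K₀)) : Subalgebra ℤ (𝓞 K) where
  carrier := {w : 𝓞 K | ∃ a : 𝓞 K₀, ∃ b ∈ Ideal.map (algebraMap (𝓞 K₀) (𝓞 K)) 𝔣₀,
    w = algebraMap (𝓞 K₀) (𝓞 K) a + b}
  add_mem' := by
    rintro x y ⟨a, b, hb, rfl⟩ ⟨a', b', hb', rfl⟩
    exact ⟨a + a', b + b', add_mem hb hb', by rw [map_add]; ring⟩
  mul_mem' := by
    rintro x y ⟨a, b, hb, rfl⟩ ⟨a', b', hb', rfl⟩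
    refine ⟨a * a',
      algebraMap (𝓞 K₀) (𝓞 K) a * b' + b * algebraMap (𝓞 K₀) (𝓞 K) a' + b * b', ?_, ?_⟩
    · exact add_mem (add_mem (Ideal.mul_mem_left _ _ hb')
        (Ideal.mul_mem_right _ _ hb)) (Ideal.mul_mem_right _ _ hb)
    · rw [map_mul]; ring
  algebraMap_mem' := by
    intro n
    refine ⟨algebraMap ℤ (𝓞 K₀) n, 0, zero_mem _, ?_⟩
    rw [add_zero, algebraMap_int_eq, algebraMap_int_eq, eq_intCast, eq_intCast, map_intCast]

private lemma mem_ordSub_iff (𝔣₀ : Ideal (𝓞 K₀)) (w : 𝓞 K) :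
    w ∈ ordSub 𝔣₀ ↔ ∃ a : 𝓞 K₀, ∃ b ∈ Ideal.map (algebraMap (𝓞 K₀) (𝓞 K)) 𝔣₀,
      w = algebraMap (𝓞 K₀) (𝓞 K) a + b := Iff.rfl

private lemma ordSet_eq_image (𝔣₀ : Ideal (𝓞 K₀)) :
    ordSet K₀ K 𝔣₀ = algebraMap (𝓞 K) K '' (ordSub (K := K) 𝔣₀ : Set (𝓞 K)) := by
  ext z
  constructor
  · rintro ⟨a, b, hb, rfl⟩
    exact ⟨algebraMap (𝓞 K₀) (𝓞 K) a + b, ⟨a, b, hb, rfl⟩, by rw [map_add, hcomp]⟩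
  · rintro ⟨w, ⟨a, b, hb, rfl⟩, rfl⟩
    exact ⟨a, b, hb, by rw [map_add, hcomp]⟩

/-- The key lemma: if `a ∈ 𝓞 K₀` multiplies all of `𝓞 K` into `ordSet`, then `a ∈ 𝔣₀`. -/
private lemma key_lemma (h2 : Module.finrank K₀ K = 2) (𝔣₀ : Ideal (𝓞 K₀)) (a : 𝓞 K₀)
    (ha : ∀ y : 𝓞 K,
      algebraMap K₀ K (algebraMap (𝓞 K₀) K₀ a) * algebraMap (𝓞 K) K y ∈ ordSet K₀ K 𝔣₀) :
    a ∈ 𝔣₀ := by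
  -- Step 1: find ω ∈ 𝓞 K not in the image of K₀
  have hspan : (⊤ : Submodule ℚ K) ≤
      Submodule.span ℚ (Set.range (algebraMap (𝓞 K) K)) := by
    rw [← (NumberField.integralBasis K).span_eq]
    apply Submodule.span_mono
    rintro _ ⟨i, rfl⟩
    exact ⟨NumberField.RingOfIntegers.basis K i, (NumberField.integralBasis_apply K i).symm⟩
  have hω : ∃ ω : 𝓞 K, ∀ c : K₀, algebraMap K₀ K c ≠ algebraMap (𝓞 K) K ω := by
    by_contra hcon
    push_neg at hcon
    have hone : Module.finrank K₀ K = 1 := by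
      refine finrank_eq_one (1 : K) one_ne_zero fun w => ?_
      have hw : w ∈ Submodule.span ℚ (Set.range (algebraMap (𝓞 K) K)) :=
        hspan Submodule.mem_top
      have hsub : Set.range (algebraMap (𝓞 K) K) ⊆
          Submodule.restrictScalars ℚ (LinearMap.range (Algebra.linearMap K₀ K)) := by
        rintro _ ⟨y, rfl⟩
        obtain ⟨c, hc⟩ := hcon y
        exact ⟨c, hc⟩
      have := Submodule.span_le.mpr hsub hw
      obtain ⟨c, hc⟩ := this
      exact ⟨c, by rw [Algebra.smul_def, mul_one]; exact hc⟩
    rw [h2] at hone; exact absurd hone (by norm_num)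
  obtain ⟨ω, hω⟩ := hω
  -- Step 2: the coordinate functional φ
  have li : LinearIndependent K₀ ![(1 : K), algebraMap (𝓞 K) K ω] := by
    refine (LinearIndependent.pair_iff' one_ne_zero).mpr fun c hc => hω c ?_
    rw [Algebra.smul_def, mul_one] at hc
    exact hc
  let B : Module.Basis (Fin 2) K₀ K :=
    basisOfLinearIndependentOfCardEqFinrank li (by rw [h2]; simp)
  have hB : ⇑B = ![(1 : K), algebraMap (𝓞 K) K ω] :=
    coe_basisOfLinearIndependentOfCardEqFinrank li _
  let φ : K →ₗ[K₀] K₀ := B.coord 1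
  have hφ1 : φ (1 : K) = 0 := by
    have h0 : (1 : K) = B 0 := by rw [hB]; simp
    rw [h0]
    simp [φ, Module.Basis.coord_apply, Module.Basis.repr_self, Finsupp.single_apply]
  have hφω : φ (algebraMap (𝓞 K) K ω) = 1 := by
    have h1 : algebraMap (𝓞 K) K ω = B 1 := by rw [hB]; simp
    rw [h1]
    simp [φ, Module.Basis.coord_apply, Module.Basis.repr_self, Finsupp.single_apply]
  have hφalg : ∀ c : K₀, φ (algebraMap K₀ K c) = 0 := by
    intro c
    rw [Algebra.algebraMap_eq_smul_one, map_smul, hφ1, smul_zero]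
  -- Step 3: common denominator d for φ on 𝓞 K
  haveI : Module.Finite (𝓞 K₀) (𝓞 K) := Module.Finite.of_restrictScalars_finite ℤ _ _
  obtain ⟨n, f, hf⟩ := Module.Finite.exists_fin (R := 𝓞 K₀) (M := 𝓞 K)
  have hden : ∀ i : Fin n, ∃ d : 𝓞 K₀, d ≠ 0 ∧ ∃ r : 𝓞 K₀,
      algebraMap (𝓞 K₀) K₀ r = algebraMap (𝓞 K₀) K₀ d * φ (algebraMap (𝓞 K) K (f i)) := by
    intro i
    obtain ⟨⟨d, hd⟩, r, hr⟩ := IsLocalization.exists_integer_multiple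
      (nonZeroDivisors (𝓞 K₀)) (φ (algebraMap (𝓞 K) K (f i)))
    refine ⟨d, nonZeroDivisors.ne_zero hd, r, ?_⟩
    rw [hr]
    rw [Algebra.smul_def]
  choose dd hdd0 hddr using hden
  set d : 𝓞 K₀ := ∏ i : Fin n, dd i with hd_def
  have hd0 : d ≠ 0 := Finset.prod_ne_zero_iff.mpr fun i _ => hdd0 i
  -- the 𝓞 K₀-linear map g : 𝓞 K → K₀ given by y ↦ d * φ(y)
  have gsmul : ∀ (c : 𝓞 K₀) (y : 𝓞 K),
      φ (algebraMap (𝓞 K) K (c • y)) = algebraMap (𝓞 K₀) K₀ c * φ (algebraMap (𝓞 K) K y) := by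
    intro c y
    have : algebraMap (𝓞 K) K (c • y)
        = algebraMap (𝓞 K₀) K₀ c • algebraMap (𝓞 K) K y := by
      rw [Algebra.smul_def, map_mul, ← hcomp, Algebra.smul_def]
    rw [this, map_smul, smul_eq_mul]
  let g : 𝓞 K →ₗ[𝓞 K₀] K₀ :=
    { toFun := fun y => algebraMap (𝓞 K₀) K₀ d * φ (algebraMap (𝓞 K) K y)
      map_add' := by intro x y; rw [map_add, map_add, mul_add]
      map_smul' := by
        intro c y
        dsimp only [RingHom.id_apply]
        rw [gsmul, Algebra.smul_def]
        ring }
  have hg : ∀ y : 𝓞 K, g y = algebraMap (𝓞 K₀) K₀ d * φ (algebraMap (𝓞 K) K y) := fun _ => rfl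
  -- propA : g takes values in the image of 𝓞 K₀
  have propA : ∀ y : 𝓞 K, ∃ r : 𝓞 K₀, algebraMap (𝓞 K₀) K₀ r = g y := by
    intro y
    have hy : y ∈ Submodule.span (𝓞 K₀) (Set.range f) := by rw [hf]; trivial
    induction hy using Submodule.span_induction with
    | mem x hx =>
      obtain ⟨i, rfl⟩ := hx
      obtain ⟨r, hr⟩ := hddr i
      classical
      refine ⟨(∏ j ∈ Finset.univ.erase i, dd j) * r, ?_⟩
      rw [map_mul, hr, hg, hd_def, ← Finset.mul_prod_erase Finset.univ dd (Finset.mem_univ i),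
        map_mul]
      ring
    | zero => exact ⟨0, by rw [map_zero, map_zero]⟩
    | add x y hx hy ihx ihy =>
      obtain ⟨r, hr⟩ := ihx; obtain ⟨r', hr'⟩ := ihy
      exact ⟨r + r', by rw [map_add, map_add, hr, hr']⟩
    | smul c x hx ih =>
      obtain ⟨r, hr⟩ := ih
      exact ⟨c * r, by rw [map_mul, hr, map_smul, Algebra.smul_def]⟩
  -- the ideal I
  set Q : Submodule (𝓞 K₀) K₀ := LinearMap.range g with hQ_def
  set I : Ideal (𝓞 K₀) := Submodule.comap (Algebra.linearMap (𝓞 K₀) K₀) Q with hI_def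
  have hI_mem : ∀ r : 𝓞 K₀, r ∈ I ↔ ∃ y : 𝓞 K, g y = algebraMap (𝓞 K₀) K₀ r := by
    intro r; rfl
  have hdI : d ∈ I := by
    rw [hI_mem]
    exact ⟨ω, by rw [hg, hφω, mul_one]⟩
  have hI0 : I ≠ ⊥ := fun h => hd0 (by rwa [h, Ideal.mem_bot] at hdI)
  -- F and its image under g
  set F : Ideal (𝓞 K) := Ideal.map (algebraMap (𝓞 K₀) (𝓞 K)) 𝔣₀ with hF_def
  have claimB : ∀ b ∈ F, ∃ t ∈ 𝔣₀ * I, algebraMap (𝓞 K₀) K₀ t = g b := by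
    intro b hb
    have hb' : b ∈ 𝔣₀ • (⊤ : Submodule (𝓞 K₀) (𝓞 K)) := by
      rw [Ideal.smul_top_eq_map, Submodule.restrictScalars_mem]
      exact hb
    refine Submodule.smul_induction_on hb' (fun s hs y _ => ?_) (fun x y ihx ihy => ?_)
    · obtain ⟨r, hr⟩ := propA y
      have hrI : r ∈ I := (hI_mem r).mpr ⟨y, hr.symm⟩
      refine ⟨s * r, Ideal.mul_mem_mul hs hrI, ?_⟩
      rw [map_mul, hr, map_smul, Algebra.smul_def]
    · obtain ⟨t, ht, ht'⟩ := ihx; obtain ⟨t', ht2, ht2'⟩ := ihy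
      exact ⟨t + t', add_mem ht ht2, by rw [map_add, map_add, ht', ht2']⟩
  -- main inequality
  have hle : Ideal.span {a} * I ≤ 𝔣₀ * I := by
    rw [Ideal.span_singleton_mul_le_iff]
    intro r hr
    obtain ⟨y, hy⟩ := (hI_mem r).mp hr
    obtain ⟨c, b, hb, heq⟩ := ha y
    -- φ (â * ŷ) = φ (b̂)
    have hφ_eq : algebraMap (𝓞 K₀) K₀ a * φ (algebraMap (𝓞 K) K y)
        = φ (algebraMap (𝓞 K) K b) := by
      have h1 : φ (algebraMap K₀ K (algebraMap (𝓞 K₀) K₀ a) * algebraMap (𝓞 K) K y)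
          = algebraMap (𝓞 K₀) K₀ a * φ (algebraMap (𝓞 K) K y) := by
        rw [← Algebra.smul_def, map_smul, smul_eq_mul]
      rw [← h1, heq, map_add, hφalg, zero_add]
    obtain ⟨t, ht, ht'⟩ := claimB b hb
    have : algebraMap (𝓞 K₀) K₀ (a * r) = algebraMap (𝓞 K₀) K₀ t := by
      rw [map_mul, ← hy, ht', hg, hg, ← hφ_eq]
      ring
    have hinj : Function.Injective (algebraMap (𝓞 K₀) K₀) :=
      NumberField.RingOfIntegers.coe_injective
    rw [hinj this]
    exact ht
  -- cancellation in the Dedekind domain 𝓞 K₀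
  have hdvd : 𝔣₀ * I ∣ Ideal.span {a} * I := Ideal.dvd_iff_le.mpr hle
  have : 𝔣₀ ∣ Ideal.span {a} := (mul_dvd_mul_iff_right hI0).mp hdvd
  have := Ideal.dvd_iff_le.mp this
  exact this (Ideal.mem_span_singleton_self a)

end Aux

/-- Let `K / K₀` be a quadratic extension of number fields.  For any nonzero ideal `𝔣₀` of
`𝓞 K₀`, the set `𝓞 K₀ + 𝔣₀ 𝓞 K` is an order of `K` containing `𝓞 K₀`, and its conductor
`{x ∈ K : x · 𝓞 K ⊆ 𝓞 K₀ + 𝔣₀ 𝓞 K}` is `𝔣₀ 𝓞 K`. -/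
theorem ordSet_isOrder_and_conductor (K₀ K : Type*) [Field K₀] [NumberField K₀]
    [Field K] [NumberField K] [Algebra K₀ K] (h2 : Module.finrank K₀ K = 2)
    (𝔣₀ : Ideal (𝓞 K₀)) (h𝔣₀ : 𝔣₀ ≠ ⊥) :
    (∃ O : Subalgebra ℤ K, (O : Set K) = ordSet K₀ K 𝔣₀ ∧ IsOrder K O ∧
        realIntegers K₀ K ⊆ (O : Set K)) ∧
      conductorSet K (ordSet K₀ K 𝔣₀) =
        algebraMap (𝓞 K) K '' (Ideal.map (algebraMap (𝓞 K₀) (𝓞 K)) 𝔣₀ : Set (𝓞 K)) := by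
  constructor
  · -- the order
    refine ⟨(ordSub 𝔣₀).map (IsScalarTower.toAlgHom ℤ (𝓞 K) K), ?_, ⟨?_, ?_⟩, ?_⟩
    · rw [Subalgebra.coe_map, IsScalarTower.coe_toAlgHom', ordSet_eq_image]
    · -- finitely generated
      have heq : Subalgebra.toSubmodule ((ordSub 𝔣₀).map (IsScalarTower.toAlgHom ℤ (𝓞 K) K))
          = Submodule.map ((IsScalarTower.toAlgHom ℤ (𝓞 K) K).toLinearMap)
            (Subalgebra.toSubmodule (ordSub (K₀ := K₀) 𝔣₀)) := rfl
      rw [heq]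
      exact Submodule.FG.map _ (IsNoetherian.noetherian _)
    · -- spans K over ℚ
      -- find a nonzero integer in 𝔣₀
      have hint : ∃ m : ℤ, m ≠ 0 ∧ algebraMap ℤ (𝓞 K₀) m ∈ 𝔣₀ := by
        obtain ⟨t, ht, ht0⟩ := Submodule.exists_mem_ne_zero_of_ne_bot h𝔣₀
        have hcomap : Ideal.comap (algebraMap ℤ (𝓞 K₀)) 𝔣₀ ≠ ⊥ :=
          Ideal.comap_ne_bot_of_integral_mem ht0 ht (Algebra.IsIntegral.isIntegral t)
        obtain ⟨m, hm, hm0⟩ := Submodule.exists_mem_ne_zero_of_ne_bot hcomap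
        exact ⟨m, hm0, hm⟩
      obtain ⟨m, hm0, hm⟩ := hint
      rw [Subalgebra.coe_map, IsScalarTower.coe_toAlgHom', ← ordSet_eq_image, eq_top_iff,
        ← (NumberField.integralBasis K).span_eq, Submodule.span_le]
      rintro _ ⟨i, rfl⟩
      set y : 𝓞 K := NumberField.RingOfIntegers.basis K i with hy_def
      have hmem : algebraMap (𝓞 K) K
          (algebraMap (𝓞 K₀) (𝓞 K) (algebraMap ℤ (𝓞 K₀) m) * y) ∈ ordSet K₀ K 𝔣₀ :=
        mem_ordSet_of_mem_map (Ideal.mul_mem_right _ _ (Ideal.mem_map_of_mem _ hm))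
      have hval : algebraMap (𝓞 K) K
          (algebraMap (𝓞 K₀) (𝓞 K) (algebraMap ℤ (𝓞 K₀) m) * y)
          = (m : ℚ) • NumberField.integralBasis K i := by
        rw [NumberField.integralBasis_apply, map_mul, ← hy_def]
        rw [algebraMap_int_eq, eq_intCast, map_intCast, map_intCast]
        rw [Rat.smul_def]
        push_cast
        ring
      have : NumberField.integralBasis K i
          = ((m : ℚ)⁻¹) • ((m : ℚ) • NumberField.integralBasis K i) := by
        rw [smul_smul, inv_mul_cancel₀ (by exact_mod_cast hm0), one_smul]
      rw [this]
      exact Submodule.smul_mem _ _ (Submodule.subset_span (hval ▸ hmem))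
    · -- contains 𝓞 K₀
      rintro _ ⟨a, rfl⟩
      rw [Subalgebra.coe_map, IsScalarTower.coe_toAlgHom', ← ordSet_eq_image]
      exact ⟨a, 0, zero_mem _, by rw [map_zero, add_zero]⟩
  · -- the conductor
    ext x
    constructor
    · intro hx
      have hx1 : x ∈ ordSet K₀ K 𝔣₀ := by
        have := hx 1
        rwa [map_one, mul_one] at this
      obtain ⟨a, b, hb, rfl⟩ := hx1
      have key : ∀ y : 𝓞 K,
          algebraMap K₀ K (algebraMap (𝓞 K₀) K₀ a) * algebraMap (𝓞 K) K y
            ∈ ordSet K₀ K 𝔣₀ := by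
        intro y
        have h1 := hx y
        have h2 : algebraMap (𝓞 K) K b * algebraMap (𝓞 K) K y ∈ ordSet K₀ K 𝔣₀ := by
          rw [← map_mul]
          exact mem_ordSet_of_mem_map (Ideal.mul_mem_right _ _ hb)
        have h3 : algebraMap K₀ K (algebraMap (𝓞 K₀) K₀ a) * algebraMap (𝓞 K) K y
            = (algebraMap K₀ K (algebraMap (𝓞 K₀) K₀ a) + algebraMap (𝓞 K) K b)
                * algebraMap (𝓞 K) K y
              - algebraMap (𝓞 K) K b * algebraMap (𝓞 K) K y := by ring
        rw [h3]
        exact ordSet_sub_mem h1 h2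
      have haf : a ∈ 𝔣₀ := key_lemma h2 𝔣₀ a key
      refine ⟨algebraMap (𝓞 K₀) (𝓞 K) a + b,
        add_mem (Ideal.mem_map_of_mem _ haf) hb, ?_⟩
      rw [map_add, hcomp]
    · rintro ⟨b, hb, rfl⟩ y
      rw [← map_mul]
      exact mem_ordSet_of_mem_map (Ideal.mul_mem_right _ _ hb)
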